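/- Let f be an n-ary polymorphism of (LO₂, LO₃) of arity n ≤ 6. Then either f has a small 2-set, or there is a unique t ∈ [n] such that f is a recoloured projection with dictating variable t. -/

import Mathlib

open Finset

/-- A triple of naturals has a unique maximum entry. -/
def HasUniqueMax (a b c : ℕ) : Prop :=
  (b < a ∧ c < a) ∨ (a < b ∧ c < b) ∨ (a < c ∧ b < c)

/-- `f` is an `n`-ary polymorphism of (LO₂, LO₃): it maps subsets of `[n]` to `{0,1,2}`
and sends every partition of `[n]` into three (possibly empty) parts to a triple with a
unique maximum. -/
def IsLOPoly (n : ℕ) (f : Finset (Fin n) → ℕ) : Prop :=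
  (∀ X, f X ≤ 2) ∧
  ∀ X Y Z : Finset (Fin n), Disjoint X Y → Disjoint X Z → Disjoint Y Z →
    X ∪ Y ∪ Z = Finset.univ → HasUniqueMax (f X) (f Y) (f Z)

/-- The function obtained from `f` by changing the value of `X` to `i`. -/
def LORecolour {n : ℕ} (f : Finset (Fin n) → ℕ) (X : Finset (Fin n)) (i : ℕ) :
    Finset (Fin n) → ℕ :=
  fun Y => if Y = X then i else f Y

/-- `X` is recolourable to `i` for `f`. -/
def LORecolourableTo {n : ℕ} (f : Finset (Fin n) → ℕ) (X : Finset (Fin n)) (i : ℕ) : Prop :=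
  i ≠ f X ∧ IsLOPoly n (LORecolour f X i)

/-- A boolean set is static if it is not recolourable to the opposite boolean value. -/
def LOStatic {n : ℕ} (f : Finset (Fin n) → ℕ) (X : Finset (Fin n)) : Prop :=
  (f X = 0 ∧ ¬ LORecolourableTo f X 1) ∨ (f X = 1 ∧ ¬ LORecolourableTo f X 0)

/-- `(X, Y, Z)` is a boolean partition of `[n]` for `f`. -/
def LOBoolPartition {n : ℕ} (f : Finset (Fin n) → ℕ) (X Y Z : Finset (Fin n)) : Prop :=
  Disjoint X Y ∧ Disjoint X Z ∧ Disjoint Y Z ∧ X ∪ Y ∪ Z = Finset.univ ∧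
    ({f X, f Y, f Z} : Set ℕ) = {0, 1}

/-- Every superset of a 2-set is a 2-set. -/
def LOUpwardsClosed {n : ℕ} (f : Finset (Fin n) → ℕ) : Prop :=
  ∀ X Y : Finset (Fin n), f X = 2 → X ⊆ Y → f Y = 2

/-- `f` is saturated: upwards closed and the complement of every boolean set is a 2-set. -/
def LOSaturated {n : ℕ} (f : Finset (Fin n) → ℕ) : Prop :=
  LOUpwardsClosed f ∧ ∀ X : Finset (Fin n), f X ≤ 1 → f Xᶜ = 2

/-- One step of saturation: `g` is a polymorphism obtained from `f` by recolouring a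
single boolean set of `f` to 2. -/
def LORecolourStep {n : ℕ} (f g : Finset (Fin n) → ℕ) : Prop :=
  IsLOPoly n g ∧ ∃ X, f X ≤ 1 ∧ g = LORecolour f X 2

/-- `g` is a saturation of `f`. -/
def IsLOSaturation {n : ℕ} (f g : Finset (Fin n) → ℕ) : Prop :=
  IsLOPoly n g ∧ LOSaturated g ∧ Relation.ReflTransGen LORecolourStep f g

/-- `f` has no small 2-set (a 2-set with at most 3 elements). -/
def LONoSmallTwoSet {n : ℕ} (f : Finset (Fin n) → ℕ) : Prop :=
  ∀ X, f X = 2 → 4 ≤ X.card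

/-- `g` is a pure saturation of `f`: a saturation with no small 2-set. -/
def IsLOPureSaturation {n : ℕ} (f g : Finset (Fin n) → ℕ) : Prop :=
  IsLOSaturation f g ∧ LONoSmallTwoSet g

/-- `M` is a minimal (under inclusion) 2-set of `f`. -/
def LOMinTwoSet {n : ℕ} (f : Finset (Fin n) → ℕ) (M : Finset (Fin n)) : Prop :=
  f M = 2 ∧ ∀ Y, Y ⊂ M → f Y ≠ 2

/-- `T_f`: the union of the minimal 2-sets of `f`. -/
def LOTSet {n : ℕ} (f : Finset (Fin n) → ℕ) : Set (Fin n) :=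
  {a | ∃ M, LOMinTwoSet f M ∧ a ∈ M}

/-- `f` is a recoloured projection with dictating variable `t`: every static boolean set
`S` satisfies `f S = 1` iff `t ∈ S` (and `f S = 0` otherwise). -/
def LORecolProj {n : ℕ} (f : Finset (Fin n) → ℕ) (t : Fin n) : Prop :=
  ∀ S, f S ≤ 1 → LOStatic f S → f S = if t ∈ S then 1 else 0

/-- The `π`-minor of `f`: `f^π (X) = f(π⁻¹(X))`. -/
def LOMinor {n m : ℕ} (f : Finset (Fin n) → ℕ) (π : Fin n → Fin m) :
    Finset (Fin m) → ℕ :=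
  fun X => f (Finset.univ.filter (fun a => π a ∈ X))

lemma lo_split {n : ℕ} (hn : n ≤ 6) (A : Finset (Fin n)) :
    ∃ Y Z : Finset (Fin n), Disjoint Y Z ∧ Y ∪ Z = A ∧ Y.card ≤ 3 ∧ Z.card ≤ 3 := by
  have hA : A.card ≤ 6 := by
    have := Finset.card_le_univ A
    rw [Fintype.card_fin] at this
    omega
  by_cases h : A.card ≤ 3
  · exact ⟨A, ∅, Finset.disjoint_empty_right _, Finset.union_empty _, h, by simp⟩
  · obtain ⟨Y, hYA, hY⟩ := Finset.exists_subset_card_eq (by omega : 3 ≤ A.card)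
    refine ⟨Y, A \ Y, Finset.disjoint_sdiff, Finset.union_sdiff_of_subset hYA, by omega, ?_⟩
    rw [Finset.card_sdiff_of_subset hYA]
    omega

lemma core6 (g : Finset (Fin 6) → ℕ) (hg : IsLOPoly 6 g)
    (hns : ∀ X, g X = 2 → 4 ≤ X.card) :
    ∃ t : Fin 6, ∀ X : Finset (Fin 6), X.card ≤ 3 → g X = if t ∈ X then 1 else 0 := by
  obtain ⟨hb2, hpart⟩ := hg
  have hb : ∀ X : Finset (Fin 6), X.card ≤ 3 → g X ≤ 1 := by
    intro X hX
    have h1 := hb2 X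
    by_contra h
    have h2 : g X = 2 := by omega
    have := hns X h2
    omega
  have exact1 : ∀ X Y Z : Finset (Fin 6), Disjoint X Y → Disjoint X Z → Disjoint Y Z →
      X ∪ Y ∪ Z = univ → X.card ≤ 3 → Y.card ≤ 3 → Z.card ≤ 3 →
      g X + g Y + g Z = 1 := by
    intro X Y Z d1 d2 d3 hu hX hY hZ
    have h := hpart X Y Z d1 d2 d3 hu
    have := hb X hX; have := hb Y hY; have := hb Z hZ
    unfold HasUniqueMax at h
    omega
  have hcompl3 : ∀ X : Finset (Fin 6), X.card = 3 → Xᶜ.card = 3 := by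
    intro X hX
    rw [Finset.card_compl, Fintype.card_fin, hX]
  have ecompl : ∀ X : Finset (Fin 6), X.card = 3 → g ∅ + g X + g Xᶜ = 1 := by
    intro X hX
    exact exact1 ∅ X Xᶜ (Finset.disjoint_empty_left _) (Finset.disjoint_empty_left _)
      disjoint_compl_right (by rw [Finset.empty_union, Finset.union_compl])
      (by simp) (by omega) (by rw [hcompl3 X hX])
  -- generic (3,2,1)-style partition lemma
  have e321 : ∀ (P : Finset (Fin 6)) (a : Fin 6), P.card = 2 → a ∉ P →
      g ((insert a P)ᶜ) + g P + g {a} = 1 := by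
    intro P a hP ha
    have hiP : (insert a P).card = 3 := by rw [Finset.card_insert_of_notMem ha, hP]
    have hXc : ((insert a P)ᶜ).card = 3 := by
      rw [Finset.card_compl, Fintype.card_fin, hiP]
    refine exact1 _ P {a} ?_ ?_ ?_ ?_ (by omega) (by omega) (by simp)
    · exact disjoint_compl_left.mono_right (Finset.subset_insert a P)
    · exact disjoint_compl_left.mono_right (by simp)
    · simp [Finset.disjoint_singleton_right, ha]
    · ext x
      simp only [Finset.mem_union, Finset.mem_compl, Finset.mem_insert, Finset.mem_singleton,
        Finset.mem_univ, iff_true]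
      tauto
  have h0 : g ∅ = 0 := by
    by_contra h0'
    have h01 : g ∅ = 1 := by have := hb ∅ (by simp); omega
    have three0 : ∀ X : Finset (Fin 6), X.card = 3 → g X = 0 := by
      intro X hX
      have := ecompl X hX
      have := hb Xᶜ (by rw [hcompl3 X hX])
      omega
    have pairSing : ∀ (P : Finset (Fin 6)) (a : Fin 6), P.card = 2 → a ∉ P →
        g P + g {a} = 1 := by
      intro P a hP ha
      have h1 := e321 P a hP ha
      have hiP : (insert a P).card = 3 := by rw [Finset.card_insert_of_notMem ha, hP]
      have h2 := three0 _ (by rw [Finset.card_compl, Fintype.card_fin, hiP])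
      omega
    have e1 := pairSing {2,3} 0 (by decide) (by decide)
    have e2 := pairSing {4,5} 0 (by decide) (by decide)
    have e3 := pairSing {0,1} 2 (by decide) (by decide)
    have e4 := pairSing {4,5} 2 (by decide) (by decide)
    have e5 := exact1 {0,1} {2,3} {4,5} (by decide) (by decide) (by decide) (by decide)
      (by decide) (by decide) (by decide)
    omega
  have compXor : ∀ X : Finset (Fin 6), X.card = 3 → g X + g Xᶜ = 1 := by
    intro X hX
    have := ecompl X hX
    omega
  have combine : ∀ (P : Finset (Fin 6)) (a : Fin 6), P.card = 2 → a ∉ P →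
      g (insert a P) = g P + g {a} := by
    intro P a hP ha
    have h1 := e321 P a hP ha
    have hiP : (insert a P).card = 3 := by rw [Finset.card_insert_of_notMem ha, hP]
    have h2 := compXor _ (by rw [Finset.card_compl, Fintype.card_fin, hiP])
    rw [compl_compl] at h2
    omega
  by_cases hA : ∃ t : Fin 6, g {t} = 1
  · obtain ⟨t, ht⟩ := hA
    have pair0 : ∀ P : Finset (Fin 6), P.card = 2 → t ∉ P → g P = 0 := by
      intro P hP htP
      have h := combine P t hP htP
      have hcard : (insert t P).card = 3 := by rw [Finset.card_insert_of_notMem htP, hP]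
      have := hb _ (le_of_eq hcard)
      omega
    have pairT : ∀ P : Finset (Fin 6), P.card = 2 → t ∈ P → g P = 1 := by
      intro P hP htP
      have hAcard : (univ \ P).card = 4 := by
        rw [Finset.card_sdiff_of_subset (Finset.subset_univ P), Finset.card_univ, Fintype.card_fin, hP]
      obtain ⟨Q, hQA, hQ⟩ := Finset.exists_subset_card_eq (by omega : 2 ≤ (univ \ P).card)
      have hRcard : ((univ \ P) \ Q).card = 2 := by
        rw [Finset.card_sdiff_of_subset hQA, hAcard, hQ]
      have hdPQ : Disjoint P Q := Finset.disjoint_sdiff.mono_right hQA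
      have hdPR : Disjoint P ((univ \ P) \ Q) :=
        Finset.disjoint_sdiff.mono_right Finset.sdiff_subset
      have hdQR : Disjoint Q ((univ \ P) \ Q) := Finset.disjoint_sdiff
      have hu2 : P ∪ Q ∪ ((univ \ P) \ Q) = univ := by
        rw [Finset.union_assoc, Finset.union_sdiff_of_subset hQA,
          Finset.union_sdiff_of_subset (Finset.subset_univ P)]
      have h1 := exact1 P Q _ hdPQ hdPR hdQR hu2 (by omega) (by omega) (by omega)
      have htQ : t ∉ Q := fun h => (Finset.mem_sdiff.1 (hQA h)).2 htP
      have htR : t ∉ (univ \ P) \ Q := fun h => (Finset.mem_sdiff.1 (Finset.sdiff_subset h)).2 htP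
      rw [pair0 Q hQ htQ, pair0 _ hRcard htR] at h1
      omega
    have sing0 : ∀ x : Fin 6, x ≠ t → g {x} = 0 := by
      intro x hx
      have hne : (univ \ ({t, x} : Finset (Fin 6))).Nonempty := by
        rw [← Finset.card_pos, Finset.card_sdiff_of_subset (Finset.subset_univ _),
          Finset.card_univ, Fintype.card_fin]
        have : ({t, x} : Finset (Fin 6)).card ≤ 2 :=
          le_trans (Finset.card_insert_le _ _) (by simp)
        omega
      obtain ⟨y, hy⟩ := hne
      rw [Finset.mem_sdiff, Finset.mem_insert, Finset.mem_singleton] at hy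
      have hyt : y ≠ t := fun h => hy.2 (Or.inl h)
      have hyx : y ≠ x := fun h => hy.2 (Or.inr h)
      have hP : ({t, y} : Finset (Fin 6)).card = 2 := by
        rw [Finset.card_insert_of_notMem (by simp [Ne.symm hyt]), Finset.card_singleton]
      have h1 : g {t, y} = 1 := pairT _ hP (Finset.mem_insert_self _ _)
      have hxP : x ∉ ({t, y} : Finset (Fin 6)) := by
        simp only [Finset.mem_insert, Finset.mem_singleton]
        push_neg
        exact ⟨hx, fun h => hyx h.symm⟩
      have h2 := combine {t,y} x hP hxP
      have h3 := hb (insert x {t,y}) (by rw [Finset.card_insert_of_notMem hxP, hP])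
      omega
    refine ⟨t, ?_⟩
    intro X hX
    have hc : X.card = 0 ∨ X.card = 1 ∨ X.card = 2 ∨ X.card = 3 := by omega
    rcases hc with h|h|h|h
    · rw [Finset.card_eq_zero] at h
      subst h
      rw [if_neg (Finset.notMem_empty t)]
      exact h0
    · obtain ⟨a, rfl⟩ := Finset.card_eq_one.1 h
      by_cases hat : a = t
      · subst hat
        rw [if_pos (Finset.mem_singleton_self a)]
        exact ht
      · rw [if_neg (by simp [Ne.symm hat])]
        exact sing0 a hat
    · by_cases htX : t ∈ X
      · rw [if_pos htX]; exact pairT X h htX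
      · rw [if_neg htX]; exact pair0 X h htX
    · by_cases htX : t ∈ X
      · rw [if_pos htX]
        have he : insert t (X.erase t) = X := Finset.insert_erase htX
        have hc2 : (X.erase t).card = 2 := by rw [Finset.card_erase_of_mem htX, h]
        have hcomb := combine (X.erase t) t hc2 (Finset.notMem_erase t X)
        rw [he] at hcomb
        rw [hcomb, pair0 _ hc2 (Finset.notMem_erase t X), ht]
      · rw [if_neg htX]
        obtain ⟨a, ha⟩ := Finset.card_pos.1 (by omega : 0 < X.card)
        have he : insert a (X.erase a) = X := Finset.insert_erase ha
        have hc2 : (X.erase a).card = 2 := by rw [Finset.card_erase_of_mem ha, h]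
        have hta : t ∉ X.erase a := fun hh => htX (Finset.mem_of_mem_erase hh)
        have hcomb := combine (X.erase a) a hc2 (Finset.notMem_erase a X)
        rw [he] at hcomb
        rw [hcomb, pair0 _ hc2 hta, sing0 a (fun he2 => htX (he2 ▸ ha))]
  · push_neg at hA
    exfalso
    have s0 : ∀ a : Fin 6, g {a} = 0 := by
      intro a
      have h1 := hb {a} (by simp)
      have h2 := hA a
      omega
    have cb : ∀ (P : Finset (Fin 6)) (a : Fin 6), P.card = 2 → a ∉ P →
        g (insert a P) = g P := by
      intro P a hP ha
      rw [combine P a hP ha, s0, Nat.add_zero]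
    have e01 := cb {0,1} 2 (by decide) (by decide)
    have e12 := cb {1,2} 0 (by decide) (by decide)
    have q1 : (insert (2:Fin 6) {0,1} : Finset (Fin 6)) = insert 0 {1,2} := by decide
    have e12' := cb {1,2} 3 (by decide) (by decide)
    have e23 := cb {2,3} 1 (by decide) (by decide)
    have q2 : (insert (3:Fin 6) {1,2} : Finset (Fin 6)) = insert 1 {2,3} := by decide
    have e23' := cb {2,3} 4 (by decide) (by decide)
    have e34 := cb {3,4} 2 (by decide) (by decide)
    have q3 : (insert (4:Fin 6) {2,3} : Finset (Fin 6)) = insert 2 {3,4} := by decide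
    have e34' := cb {3,4} 5 (by decide) (by decide)
    have e45 := cb {4,5} 3 (by decide) (by decide)
    have q4 : (insert (5:Fin 6) {3,4} : Finset (Fin 6)) = insert 3 {4,5} := by decide
    have esum := exact1 {0,1} {2,3} {4,5} (by decide) (by decide) (by decide) (by decide)
      (by decide) (by decide) (by decide)
    rw [q1] at e01
    rw [q2] at e12'
    rw [q3] at e23'
    rw [q4] at e34'
    omega

/-- A polymorphism of arity at most 6 either has a small 2-set or is a recoloured
projection with a unique dictating variable. -/
theorem stmt12 (n : ℕ) (hn1 : 1 ≤ n) (hn : n ≤ 6) (f : Finset (Fin n) → ℕ)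
    (hf : IsLOPoly n f) :
    (∃ X : Finset (Fin n), f X = 2 ∧ X.card ≤ 3) ∨
    (∃! t : Fin n, LORecolProj f t) := by
  by_cases hsmall : ∃ X : Finset (Fin n), f X = 2 ∧ X.card ≤ 3
  · exact Or.inl hsmall
  push_neg at hsmall
  have hN : ∀ X : Finset (Fin n), f X = 2 → 4 ≤ X.card := by
    intro X h
    have := hsmall X h
    omega
  set σ : Fin n → Fin 6 := Fin.castLE hn with hσdef
  have hσinj : Function.Injective σ := Fin.castLE_injective hn
  -- the minor is a polymorphism
  have hminor_poly : IsLOPoly 6 (LOMinor f σ) := by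
    constructor
    · intro X; exact hf.1 _
    · intro X Y Z dXY dXZ dYZ hu
      have hd : ∀ {U V : Finset (Fin 6)}, Disjoint U V →
          Disjoint (Finset.univ.filter (fun a => σ a ∈ U))
            (Finset.univ.filter (fun a => σ a ∈ V)) := by
        intro U V hUV
        rw [Finset.disjoint_left] at hUV ⊢
        intro a ha hb
        rw [Finset.mem_filter] at ha hb
        exact hUV ha.2 hb.2
      have hcov : (Finset.univ.filter (fun a => σ a ∈ X)) ∪
          (Finset.univ.filter (fun a => σ a ∈ Y)) ∪
          (Finset.univ.filter (fun a => σ a ∈ Z)) = Finset.univ := by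
        apply Finset.eq_univ_of_forall
        intro a
        have hm : σ a ∈ X ∪ Y ∪ Z := by rw [hu]; exact Finset.mem_univ _
        simp only [Finset.mem_union, Finset.mem_filter, Finset.mem_univ, true_and] at hm ⊢
        tauto
      exact hf.2 _ _ _ (hd dXY) (hd dXZ) (hd dYZ) hcov
  have hminor_ns : ∀ X, LOMinor f σ X = 2 → 4 ≤ X.card := by
    intro X h2
    have h4 := hN _ h2
    refine le_trans h4 (Finset.card_le_card_of_injOn σ ?_ (hσinj.injOn))
    intro a ha
    rw [Finset.mem_coe, Finset.mem_filter] at ha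
    exact ha.2
  obtain ⟨t', dict6⟩ := core6 (LOMinor f σ) hminor_poly hminor_ns
  have himg : ∀ S : Finset (Fin n),
      Finset.univ.filter (fun a => σ a ∈ S.image σ) = S := by
    intro S
    ext a
    simp only [Finset.mem_filter, Finset.mem_univ, true_and, Finset.mem_image]
    constructor
    · rintro ⟨b, hb, he⟩
      rwa [← hσinj he]
    · intro h
      exact ⟨a, h, rfl⟩
  have hval : ∀ S : Finset (Fin n), LOMinor f σ (S.image σ) = f S := by
    intro S
    unfold LOMinor
    rw [himg S]
  have hcard_img : ∀ S : Finset (Fin n), (S.image σ).card = S.card := by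
    intro S
    exact Finset.card_image_of_injective S hσinj
  have htn : (t' : ℕ) < n := by
    by_contra htn
    push_neg at htn
    have hzero : ∀ S : Finset (Fin n), S.card ≤ 3 → f S = 0 := by
      intro S hS
      have h2 := dict6 (S.image σ) (by rw [hcard_img]; exact hS)
      rw [hval] at h2
      rw [h2, if_neg]
      intro hmem
      obtain ⟨b, hb, he⟩ := Finset.mem_image.1 hmem
      have hv : ((σ b : Fin 6) : ℕ) = (b : ℕ) := Fin.coe_castLE hn b
      have hv2 : ((σ b : Fin 6) : ℕ) = (t' : ℕ) := by rw [he]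
      have := b.isLt
      omega
    obtain ⟨Y, Z, dYZ, hYZ, hY3, hZ3⟩ := lo_split hn Finset.univ
    have h := hf.2 Y Z ∅ dYZ (Finset.disjoint_empty_right _) (Finset.disjoint_empty_right _)
      (by rw [Finset.union_empty, hYZ])
    rw [hzero Y hY3, hzero Z hZ3, hzero ∅ (by simp)] at h
    unfold HasUniqueMax at h
    omega
  set t : Fin n := ⟨(t' : ℕ), htn⟩ with htdef
  have hσt : σ t = t' := by
    apply Fin.ext
    rw [hσdef]
    simp [htdef]
  have dict : ∀ S : Finset (Fin n), S.card ≤ 3 → f S = if t ∈ S then 1 else 0 := by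
    intro S hS
    have h2 := dict6 (S.image σ) (by rw [hcard_img]; exact hS)
    rw [hval] at h2
    rw [h2]
    have hiff : t' ∈ S.image σ ↔ t ∈ S := by
      rw [← hσt]
      constructor
      · intro h
        obtain ⟨b, hb, he⟩ := Finset.mem_image.1 h
        rwa [← hσinj he]
      · intro h
        exact Finset.mem_image_of_mem σ h
    by_cases h : t ∈ S
    · rw [if_pos h, if_pos (hiff.2 h)]
    · rw [if_neg h, if_neg (fun hh => h (hiff.1 hh))]
  -- strong facts about boolean sets of any size
  have strong0 : ∀ S : Finset (Fin n), f S = 0 → t ∉ S := by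
    intro S hS0 htS
    obtain ⟨Y, Z, dYZ, hYZ, hY3, hZ3⟩ := lo_split hn Sᶜ
    have hYc : Y ⊆ Sᶜ := by rw [← hYZ]; exact Finset.subset_union_left
    have hZc : Z ⊆ Sᶜ := by rw [← hYZ]; exact Finset.subset_union_right
    have dSY : Disjoint S Y := disjoint_compl_right.mono_right hYc
    have dSZ : Disjoint S Z := disjoint_compl_right.mono_right hZc
    have huni : S ∪ Y ∪ Z = Finset.univ := by
      rw [Finset.union_assoc, hYZ, Finset.union_compl]
    have htY : t ∉ Y := fun h => (Finset.mem_compl.1 (hYc h)) htS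
    have htZ : t ∉ Z := fun h => (Finset.mem_compl.1 (hZc h)) htS
    have hfY : f Y = 0 := by rw [dict Y hY3, if_neg htY]
    have hfZ : f Z = 0 := by rw [dict Z hZ3, if_neg htZ]
    have h := hf.2 S Y Z dSY dSZ dYZ huni
    rw [hS0, hfY, hfZ] at h
    unfold HasUniqueMax at h
    omega
  have strong1 : ∀ S : Finset (Fin n), f S = 1 → t ∈ S := by
    intro S hS1
    by_contra htS
    obtain ⟨Y, Z, dYZ, hYZ, hY3, hZ3⟩ := lo_split hn Sᶜ
    have hYc : Y ⊆ Sᶜ := by rw [← hYZ]; exact Finset.subset_union_left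
    have hZc : Z ⊆ Sᶜ := by rw [← hYZ]; exact Finset.subset_union_right
    have dSY : Disjoint S Y := disjoint_compl_right.mono_right hYc
    have dSZ : Disjoint S Z := disjoint_compl_right.mono_right hZc
    have huni : S ∪ Y ∪ Z = Finset.univ := by
      rw [Finset.union_assoc, hYZ, Finset.union_compl]
    have htSc : t ∈ Y ∪ Z := by rw [hYZ]; exact Finset.mem_compl.2 htS
    have h := hf.2 S Y Z dSY dSZ dYZ huni
    rcases Finset.mem_union.1 htSc with htY | htZ
    · have hfY : f Y = 1 := by rw [dict Y hY3, if_pos htY]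
      rw [hS1, hfY] at h
      have hZ2 := hf.1 Z
      unfold HasUniqueMax at h
      have hZeq : f Z = 2 := by omega
      have := hN Z hZeq
      omega
    · have hfZ : f Z = 1 := by rw [dict Z hZ3, if_pos htZ]
      rw [hS1, hfZ] at h
      have hY2 := hf.1 Y
      unfold HasUniqueMax at h
      have hYeq : f Y = 2 := by omega
      have := hN Y hYeq
      omega
  have hproj : LORecolProj f t := by
    intro S hS1 _
    have : f S = 0 ∨ f S = 1 := by omega
    rcases this with h | h
    · rw [if_neg (strong0 S h)]
      exact h
    · rw [if_pos (strong1 S h)]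
      exact h
  have hft : f {t} = 1 := by
    rw [dict {t} (by simp), if_pos (Finset.mem_singleton_self t)]
  have hstatic : LOStatic f {t} := by
    refine Or.inr ⟨hft, ?_⟩
    intro hrec
    unfold LORecolourableTo IsLOPoly at hrec
    obtain ⟨-, -, hpart'⟩ := hrec
    obtain ⟨Y, Z, dYZ, hYZ, hY3, hZ3⟩ := lo_split hn ({t} : Finset (Fin n))ᶜ
    have hYc : Y ⊆ ({t} : Finset (Fin n))ᶜ := by rw [← hYZ]; exact Finset.subset_union_left
    have hZc : Z ⊆ ({t} : Finset (Fin n))ᶜ := by rw [← hYZ]; exact Finset.subset_union_right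
    have dSY : Disjoint ({t} : Finset (Fin n)) Y := disjoint_compl_right.mono_right hYc
    have dSZ : Disjoint ({t} : Finset (Fin n)) Z := disjoint_compl_right.mono_right hZc
    have huni : ({t} : Finset (Fin n)) ∪ Y ∪ Z = Finset.univ := by
      rw [Finset.union_assoc, hYZ, Finset.union_compl]
    have htY : t ∉ Y := fun h => (Finset.mem_compl.1 (hYc h)) (Finset.mem_singleton_self t)
    have htZ : t ∉ Z := fun h => (Finset.mem_compl.1 (hZc h)) (Finset.mem_singleton_self t)
    have hYne : Y ≠ {t} := fun h => htY (h ▸ Finset.mem_singleton_self t)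
    have hZne : Z ≠ {t} := fun h => htZ (h ▸ Finset.mem_singleton_self t)
    have h := hpart' {t} Y Z dSY dSZ dYZ huni
    unfold LORecolour at h
    rw [if_pos rfl, if_neg hYne, if_neg hZne] at h
    have hfY : f Y = 0 := by rw [dict Y hY3, if_neg htY]
    have hfZ : f Z = 0 := by rw [dict Z hZ3, if_neg htZ]
    rw [hfY, hfZ] at h
    unfold HasUniqueMax at h
    omega
  refine Or.inr ⟨t, hproj, ?_⟩
  intro t' hproj'
  have h := hproj' {t} (by rw [hft]) hstatic
  rw [hft] at h
  by_cases hm : t' ∈ ({t} : Finset (Fin n))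
  · exact Finset.mem_singleton.1 hm
  · rw [if_neg hm] at h
    omega
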